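/- Let B be a finite set in a commutative group that is k-covering. Then for every positive integer m, |(m+1)B| ≤ |B| · J(k, m), where J(k, m) denotes the number of k-tuples of integers (x₁, …, x_k) satisfying Σᵢ xᵢ⁺ = Σᵢ xᵢ⁻ ≤ m (here x⁺ = max(x, 0) and x⁻ = max(−x, 0)). -/

import Mathlib

open Pointwise

/-- `iterSumset m B` is the `m`-fold iterated sumset `B + B + ⋯ + B` (with the
convention that the `0`-fold sumset is `{0}`). -/
def iterSumset {G : Type*} [AddCommGroup G] [DecidableEq G] : ℕ → Finset G → Finset G
  | 0, _ => {0}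
  | n + 1, B => B + iterSumset n B

/-- `J k m` is the number of `k`-tuples of integers `(x₁, …, x_k)` with
`∑ᵢ xᵢ⁺ = ∑ᵢ xᵢ⁻ ≤ m`, where `x⁺ = max(x,0)` and `x⁻ = max(−x,0)`. -/
noncomputable def J (k m : ℕ) : ℕ :=
  Nat.card {x : Fin k → ℤ //
    (∑ i, max (x i) 0) = (∑ i, max (-(x i)) 0) ∧ (∑ i, max (x i) 0) ≤ m}

/-- **Lemma 4** (Green–Ruzsa). Let `B` be a finite `k`-covering set in a commutative
group. Then for every positive integer `m`, `|(m+1)B| ≤ |B| · J(k, m)`. -/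
theorem card_iterated_sumset_le_of_covering {G : Type*} [AddCommGroup G] [DecidableEq G]
    (B : Finset G) (k : ℕ)
    (hcov : ∃ T : Finset G, T.card = k ∧ B + B ⊆ B + (T - T)) :
    ∀ m : ℕ, 0 < m → (iterSumset (m + 1) B).card ≤ B.card * J k m := by
  classical
  obtain ⟨T, hT, hBB⟩ := hcov
  intro m _
  -- enumerate T
  set t : Fin k → G := fun i => ((T.equivFin).symm (Fin.cast hT.symm i) : G) with ht
  have htsurj : ∀ u ∈ T, ∃ i, t i = u := by
    intro u hu
    exact ⟨Fin.cast hT (T.equivFin ⟨u, hu⟩), by simp [ht]⟩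
  set f : (Fin k → ℤ) → G := fun x => ∑ i, x i • t i with hf
  have hfadd : ∀ x y, f (x + y) = f x + f y := by
    intro x y
    simp [hf, add_zsmul, Finset.sum_add_distrib]
  have hfneg : ∀ x, f (-x) = - f x := by
    intro x
    simp [hf, neg_zsmul]
  have hfsingle : ∀ i : Fin k, f (Pi.single i 1) = t i := by
    intro i
    simp [hf]
  -- key structural lemma
  have key : ∀ n : ℕ, ∀ g ∈ iterSumset (n+1) B, ∃ b ∈ B, ∃ x : Fin k → ℤ,
      (∑ i, x i) = 0 ∧ (∑ i, max (x i) 0) ≤ (n : ℤ) ∧ g = b + f x := by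
    intro n
    induction n with
    | zero =>
      intro g hg
      obtain ⟨b, hb, c, hc, rfl⟩ := Finset.mem_add.mp hg
      simp only [iterSumset, Finset.mem_singleton] at hc
      subst hc
      exact ⟨b, hb, 0, by simp, by simp, by simp [hf]⟩
    | succ n ih =>
      intro g hg
      obtain ⟨a, ha, g', hg', rfl⟩ := Finset.mem_add.mp hg
      obtain ⟨b, hb, x, hx0, hxm, rfl⟩ := ih g' hg'
      have hab : a + b ∈ B + (T - T) := hBB (Finset.add_mem_add ha hb)
      obtain ⟨c, hc, d, hd, hcd⟩ := Finset.mem_add.mp hab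
      obtain ⟨u, hu, v, hv, rfl⟩ := Finset.mem_sub.mp hd
      obtain ⟨i, rfl⟩ := htsurj u hu
      obtain ⟨j, rfl⟩ := htsurj v hv
      set y : Fin k → ℤ := x + Pi.single i (1:ℤ) - Pi.single j (1:ℤ) with hy
      refine ⟨c, hc, y, ?_, ?_, ?_⟩
      · simp [hy, Finset.sum_add_distrib, Finset.sum_sub_distrib, Finset.sum_pi_single', hx0]
      · have hpt : ∀ l, max (y l) 0
            ≤ max (x l) 0 + (Pi.single i (1:ℤ) : Fin k → ℤ) l := by
          intro l
          simp only [hy, Pi.add_apply, Pi.sub_apply, Pi.single_apply]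
          split_ifs <;> simp [max_def] <;> split_ifs <;> omega
        calc ∑ l, max (y l) 0
            ≤ ∑ l, (max (x l) 0 + (Pi.single i (1:ℤ) : Fin k → ℤ) l) :=
              Finset.sum_le_sum fun l _ => hpt l
          _ = (∑ l, max (x l) 0) + 1 := by
              rw [Finset.sum_add_distrib, Finset.sum_pi_single']; simp
          _ ≤ (n : ℤ) + 1 := by linarith
          _ = ((n + 1 : ℕ) : ℤ) := by push_cast; ring
      · have hfe : f y = f x + t i - t j := by
          have hy2 : y = (x + Pi.single i (1:ℤ)) + (-(Pi.single j (1:ℤ))) := by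
            rw [hy]; abel
          rw [hy2, hfadd, hfadd, hfneg, hfsingle, hfsingle]
          abel
        rw [hfe, show c + (f x + t i - t j) = (c + (t i - t j)) + f x from by abel, hcd]
        abel
  -- the finite set of admissible exponent vectors
  set S : Finset (Fin k → ℤ) :=
    (Fintype.piFinset fun _ : Fin k => Finset.Icc (-(m:ℤ)) m).filter
      (fun x => (∑ i, max (x i) 0) = (∑ i, max (-(x i)) 0) ∧ (∑ i, max (x i) 0) ≤ (m:ℤ)) with hSdef
  have hS : ∀ x : Fin k → ℤ, x ∈ S ↔
      ((∑ i, max (x i) 0) = (∑ i, max (-(x i)) 0) ∧ (∑ i, max (x i) 0) ≤ (m:ℤ)) := by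
    intro x
    simp only [hSdef, Finset.mem_filter, Fintype.mem_piFinset, Finset.mem_Icc, and_iff_right_iff_imp]
    rintro ⟨heq, hle⟩ i
    have h1 : x i ≤ max (x i) 0 := le_max_left _ _
    have h2 : max (x i) 0 ≤ ∑ l, max (x l) 0 :=
      Finset.single_le_sum (fun l _ => le_max_right (x l) 0) (Finset.mem_univ i)
    have h3 : -(x i) ≤ max (-(x i)) 0 := le_max_left _ _
    have h4 : max (-(x i)) 0 ≤ ∑ l, max (-(x l)) 0 :=
      Finset.single_le_sum (fun l _ => le_max_right (-(x l)) 0) (Finset.mem_univ i)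
    omega
  have hJ : J k m = S.card := by
    rw [J, Nat.card_congr (Equiv.subtypeEquivRight (fun x => (hS x).symm))]
    have : {x : Fin k → ℤ // x ∈ S} = (↑S : Set (Fin k → ℤ)) := rfl
    rw [this, Nat.card_coe_set_eq, Set.ncard_coe_finset]
  have hsub : iterSumset (m+1) B ⊆ (B ×ˢ S).image (fun p => p.1 + f p.2) := by
    intro g hg
    obtain ⟨b, hb, x, hx0, hxm, rfl⟩ := key m g hg
    refine Finset.mem_image.mpr ⟨(b, x), Finset.mem_product.mpr ⟨hb, (hS x).mpr ⟨?_, hxm⟩⟩, rfl⟩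
    have hdiff : (∑ i, max (x i) 0) - (∑ i, max (-(x i)) 0) = ∑ i, x i := by
      rw [← Finset.sum_sub_distrib]
      exact Finset.sum_congr rfl fun i _ => by
        rcases le_total (x i) 0 with h | h <;> simp [max_eq_left, max_eq_right, h]
    omega
  calc (iterSumset (m+1) B).card
      ≤ ((B ×ˢ S).image (fun p => p.1 + f p.2)).card := Finset.card_le_card hsub
    _ ≤ (B ×ˢ S).card := Finset.card_image_le
    _ = B.card * S.card := Finset.card_product _ _
    _ = B.card * J k m := by rw [hJ]
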